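/- Let n, m be positive integers and β > 0. Let Γ : ℝⁿ → ℝ^{(n+m)×(n+m)} and Σ : ℝⁿ → ℝ^{(n+m)×(n+m)} be continuous and bounded, let F : ℝⁿ → ℝⁿ be continuous and bounded, and let C ∈ ℝ^{(n+m)×(n+m)} be symmetric positive definite such that for some λ > 0 one has zᵀ(Γ(q)ᵀC + CΓ(q))z ≥ λ·zᵀCz for all q ∈ ℝⁿ and z ∈ ℝ^{n+m}. Then there exist θ > 0 and b ∈ ℝ such that the function K_θ(q,p,s) = exp((θ/2)·zᵀCz), with z = (p,s), satisfies (L K_θ)(q,p,s) ≤ −K_θ(q,p,s) + b for all (q,p,s) ∈ ℝⁿ×ℝⁿ×ℝᵐ. -/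

import Mathlib

open Matrix

/-- The coordinate direction in the `q`-variable. -/
noncomputable def eQ (n m : ℕ) (i : Fin n) : (Fin n → ℝ) × (Fin n → ℝ) × (Fin m → ℝ) :=
  (Pi.single i 1, 0, 0)

/-- The coordinate direction in the `p`-variable. -/
noncomputable def eP (n m : ℕ) (i : Fin n) : (Fin n → ℝ) × (Fin n → ℝ) × (Fin m → ℝ) :=
  (0, Pi.single i 1, 0)

/-- The coordinate direction in the `s`-variable. -/
noncomputable def eS (n m : ℕ) (j : Fin m) : (Fin n → ℝ) × (Fin n → ℝ) × (Fin m → ℝ) :=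
  (0, 0, Pi.single j 1)

/-- The coordinate direction in the `z = (p,s)`-variable. -/
noncomputable def eZ (n m : ℕ) : Fin (n + m) → (Fin n → ℝ) × (Fin n → ℝ) × (Fin m → ℝ) :=
  Fin.addCases (eP n m) (eS n m)

/-- The generator of the quasi-Markovian generalized Langevin equation:
`(Lφ)(q,p,s) = ⟨F(q), ∇_p φ⟩ + ⟨p, ∇_q φ⟩ − ⟨Γ(q)z, ∇_z φ⟩
  + (1/(2β)) ∑_{i,j} (Σ(q)Σ(q)ᵀ)_{ij} ∂²φ/∂z_i∂z_j`, where `z = (p,s)`. -/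
noncomputable def gleGen {n m : ℕ} (β : ℝ)
    (F : (Fin n → ℝ) → (Fin n → ℝ))
    (Γ Sig : (Fin n → ℝ) → Matrix (Fin (n + m)) (Fin (n + m)) ℝ)
    (φ : (Fin n → ℝ) × (Fin n → ℝ) × (Fin m → ℝ) → ℝ)
    (x : (Fin n → ℝ) × (Fin n → ℝ) × (Fin m → ℝ)) : ℝ :=
  let z : Fin (n + m) → ℝ := Fin.addCases x.2.1 x.2.2
  (∑ i, F x.1 i * fderiv ℝ φ x (eP n m i))
    + (∑ i, x.2.1 i * fderiv ℝ φ x (eQ n m i))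
    - (∑ i, (Γ x.1).mulVec z i * fderiv ℝ φ x (eZ n m i))
    + (1 / (2 * β)) * ∑ i, ∑ j,
        (Sig x.1 * (Sig x.1)ᵀ) i j * fderiv ℝ (fun y => fderiv ℝ φ y (eZ n m j)) x (eZ n m i)

set_option maxHeartbeats 1000000

noncomputable def ZL (n m : ℕ) :
    ((Fin n → ℝ) × (Fin n → ℝ) × (Fin m → ℝ)) →L[ℝ] (Fin (n + m) → ℝ) :=
  LinearMap.toContinuousLinearMap
  { toFun := fun x => Fin.addCases x.2.1 x.2.2
    map_add' := fun x y => by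
      funext i
      refine Fin.addCases (fun i0 => ?_) (fun i0 => ?_) i <;>
        simp [Fin.addCases_left, Fin.addCases_right]
    map_smul' := fun c x => by
      funext i
      refine Fin.addCases (fun i0 => ?_) (fun i0 => ?_) i <;>
        simp [Fin.addCases_left, Fin.addCases_right] }

@[simp] lemma ZL_apply {n m : ℕ} (x : (Fin n → ℝ) × (Fin n → ℝ) × (Fin m → ℝ)) :
    ZL n m x = Fin.addCases x.2.1 x.2.2 := rfl

lemma ZL_eQ {n m : ℕ} (i : Fin n) : ZL n m (eQ n m i) = 0 := by
  funext k
  refine Fin.addCases (fun k0 => ?_) (fun k0 => ?_) k <;> simp [eQ]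

lemma ZL_eP {n m : ℕ} (i : Fin n) :
    ZL n m (eP n m i) = Pi.single (Fin.castAdd m i) 1 := by
  funext k
  refine Fin.addCases (fun k0 => ?_) (fun k0 => ?_) k
  · simp [eP, Pi.single_apply, Fin.ext_iff]
  · simp only [ZL_apply, eP, Fin.addCases_right, Pi.single_apply, Fin.ext_iff, Fin.coe_castAdd, Fin.coe_natAdd]
    rw [if_neg (by omega)]
    rfl

lemma ZL_eZ {n m : ℕ} (j : Fin (n + m)) :
    ZL n m (eZ n m j) = Pi.single j 1 := by
  refine Fin.addCases (fun j0 => ?_) (fun j0 => ?_) j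
  · rw [eZ, Fin.addCases_left, ZL_eP]
  · rw [eZ, Fin.addCases_right]
    funext k
    refine Fin.addCases (fun k0 => ?_) (fun k0 => ?_) k
    · simp only [ZL_apply, eS, Fin.addCases_left, Pi.single_apply, Fin.ext_iff, Fin.coe_castAdd, Fin.coe_natAdd]
      rw [if_neg (by omega)]
      rfl
    · simp [eS, Pi.single_apply, Fin.ext_iff]

noncomputable def dotL {N : ℕ} (w : Fin N → ℝ) : (Fin N → ℝ) →L[ℝ] ℝ :=
  LinearMap.toContinuousLinearMap
  { toFun := fun v => w ⬝ᵥ v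
    map_add' := fun a b => by simp [dotProduct_add]
    map_smul' := fun c a => by simp [dotProduct_smul] }

@[simp] lemma dotL_apply {N : ℕ} (w v : Fin N → ℝ) : dotL w v = w ⬝ᵥ v := rfl

lemma sum_sym_aux {N : ℕ} (C : Matrix (Fin N) (Fin N) ℝ)
    (hs : ∀ i j, C i j = C j i) (a b : Fin N → ℝ) :
    ∑ i, ∑ j, (a i * (C i j * b j) + (C i j * a j) * b i)
      = 2 * ∑ j, (∑ k, C j k * a k) * b j := by
  have h1 : ∑ i, ∑ j, a i * (C i j * b j) = ∑ j, (∑ k, C j k * a k) * b j := by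
    rw [Finset.sum_comm]
    refine Finset.sum_congr rfl fun j _ => ?_
    rw [Finset.sum_mul]
    refine Finset.sum_congr rfl fun k _ => ?_
    rw [hs k j]; ring
  have h2 : ∑ i, ∑ j, (C i j * a j) * b i = ∑ j, (∑ k, C j k * a k) * b j := by
    refine Finset.sum_congr rfl fun i _ => ?_
    rw [Finset.sum_mul]
  calc ∑ i, ∑ j, (a i * (C i j * b j) + (C i j * a j) * b i)
      = (∑ i, ∑ j, a i * (C i j * b j)) + ∑ i, ∑ j, (C i j * a j) * b i := by
        rw [← Finset.sum_add_distrib]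
        exact Finset.sum_congr rfl fun i _ => by rw [← Finset.sum_add_distrib]
    _ = 2 * ∑ j, (∑ k, C j k * a k) * b j := by rw [h1, h2]; ring

lemma hasFDerivAt_quad {n m : ℕ} (C : Matrix (Fin (n + m)) (Fin (n + m)) ℝ)
    (hs : ∀ i j, C i j = C j i) (x : (Fin n → ℝ) × (Fin n → ℝ) × (Fin m → ℝ)) :
    HasFDerivAt (fun y => ZL n m y ⬝ᵥ C *ᵥ ZL n m y)
      ((2 : ℝ) • ((dotL (C *ᵥ ZL n m x)).comp (ZL n m))) x := by
  have hfun : (fun y => ZL n m y ⬝ᵥ C *ᵥ ZL n m y)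
      = fun y => ∑ i, ∑ j, (ZL n m y i) * (C i j * ZL n m y j) := by
    funext y
    simp [dotProduct, mulVec, Finset.mul_sum]
  set Li : Fin (n + m) → ((Fin n → ℝ) × (Fin n → ℝ) × (Fin m → ℝ)) →L[ℝ] ℝ :=
    fun i => (ContinuousLinearMap.proj i).comp (ZL n m) with hLi
  have key : HasFDerivAt (fun y => ∑ i, ∑ j, (ZL n m y i) * (C i j * ZL n m y j))
      (∑ i, ∑ j, ((ZL n m x i) • (C i j • Li j) + (C i j * ZL n m x j) • Li i)) x := by
    apply HasFDerivAt.fun_sum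
    intro i _
    apply HasFDerivAt.fun_sum
    intro j _
    exact (Li i).hasFDerivAt.fun_mul ((Li j).hasFDerivAt.const_mul (C i j))
  rw [hfun]
  convert key using 1
  refine ContinuousLinearMap.ext fun v => ?_
  simp only [ContinuousLinearMap.smul_apply, ContinuousLinearMap.coe_sum',
    Finset.sum_apply, ContinuousLinearMap.add_apply, ContinuousLinearMap.coe_comp',
    Function.comp_apply, dotL_apply, smul_eq_mul, hLi, ContinuousLinearMap.proj_apply]
  rw [sum_sym_aux C hs (ZL n m x) (ZL n m v)]
  simp [dotProduct, mulVec]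

section Deriv

variable {n m : ℕ} (θ : ℝ) (C : Matrix (Fin (n + m)) (Fin (n + m)) ℝ)

lemma hasFDerivAt_phi (hs : ∀ i j, C i j = C j i)
    (x : (Fin n → ℝ) × (Fin n → ℝ) × (Fin m → ℝ)) :
    HasFDerivAt (fun y => Real.exp ((θ / 2) * (ZL n m y ⬝ᵥ C *ᵥ ZL n m y)))
      (Real.exp ((θ / 2) * (ZL n m x ⬝ᵥ C *ᵥ ZL n m x)) •
        (θ • ((dotL (C *ᵥ ZL n m x)).comp (ZL n m)))) x := by
  have h2 := ((hasFDerivAt_quad C hs x).const_mul (θ / 2)).exp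
  refine h2.congr_fderiv ?_
  refine ContinuousLinearMap.ext fun v => ?_
  simp only [ContinuousLinearMap.smul_apply, smul_eq_mul]
  ring

lemma fderiv_phi_apply (hs : ∀ i j, C i j = C j i)
    (x v : (Fin n → ℝ) × (Fin n → ℝ) × (Fin m → ℝ)) :
    fderiv ℝ (fun y => Real.exp ((θ / 2) * (ZL n m y ⬝ᵥ C *ᵥ ZL n m y))) x v
      = Real.exp ((θ / 2) * (ZL n m x ⬝ᵥ C *ᵥ ZL n m x)) *
          (θ * ((C *ᵥ ZL n m x) ⬝ᵥ ZL n m v)) := by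
  rw [(hasFDerivAt_phi θ C hs x).fderiv]
  simp [smul_eq_mul]

lemma dot_single {N : ℕ} (v : Fin N → ℝ) (j : Fin N) :
    v ⬝ᵥ Pi.single j 1 = v j := by
  simp [dotProduct, Pi.single_apply]

lemma fderiv_phi_eZ (hs : ∀ i j, C i j = C j i)
    (x : (Fin n → ℝ) × (Fin n → ℝ) × (Fin m → ℝ)) (j : Fin (n + m)) :
    fderiv ℝ (fun y => Real.exp ((θ / 2) * (ZL n m y ⬝ᵥ C *ᵥ ZL n m y))) x (eZ n m j)
      = Real.exp ((θ / 2) * (ZL n m x ⬝ᵥ C *ᵥ ZL n m x)) * (θ * (C *ᵥ ZL n m x) j) := by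
  rw [fderiv_phi_apply θ C hs x, ZL_eZ, dot_single]

lemma fderiv_phi_eP (hs : ∀ i j, C i j = C j i)
    (x : (Fin n → ℝ) × (Fin n → ℝ) × (Fin m → ℝ)) (i : Fin n) :
    fderiv ℝ (fun y => Real.exp ((θ / 2) * (ZL n m y ⬝ᵥ C *ᵥ ZL n m y))) x (eP n m i)
      = Real.exp ((θ / 2) * (ZL n m x ⬝ᵥ C *ᵥ ZL n m x)) *
          (θ * (C *ᵥ ZL n m x) (Fin.castAdd m i)) := by
  rw [fderiv_phi_apply θ C hs x, ZL_eP, dot_single]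

lemma fderiv_phi_eQ (hs : ∀ i j, C i j = C j i)
    (x : (Fin n → ℝ) × (Fin n → ℝ) × (Fin m → ℝ)) (i : Fin n) :
    fderiv ℝ (fun y => Real.exp ((θ / 2) * (ZL n m y ⬝ᵥ C *ᵥ ZL n m y))) x (eQ n m i)
      = 0 := by
  rw [fderiv_phi_apply θ C hs x, ZL_eQ]
  simp

lemma fderiv2_phi (hs : ∀ i j, C i j = C j i)
    (x : (Fin n → ℝ) × (Fin n → ℝ) × (Fin m → ℝ)) (i j : Fin (n + m)) :
    fderiv ℝ (fun y =>
        fderiv ℝ (fun y' => Real.exp ((θ / 2) * (ZL n m y' ⬝ᵥ C *ᵥ ZL n m y'))) y (eZ n m j))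
      x (eZ n m i)
      = θ * (Real.exp ((θ / 2) * (ZL n m x ⬝ᵥ C *ᵥ ZL n m x)) * C j i
          + (C *ᵥ ZL n m x) j *
            (Real.exp ((θ / 2) * (ZL n m x ⬝ᵥ C *ᵥ ZL n m x)) * (θ * (C *ᵥ ZL n m x) i))) := by
  set CZj : ((Fin n → ℝ) × (Fin n → ℝ) × (Fin m → ℝ)) →L[ℝ] ℝ :=
    (ContinuousLinearMap.proj j).comp
      ((Matrix.mulVecLin C).toContinuousLinearMap.comp (ZL n m)) with hCZj
  have hCZj_apply : ∀ y, CZj y = (C *ᵥ ZL n m y) j := fun y => rfl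
  have funeq : (fun y =>
      fderiv ℝ (fun y' => Real.exp ((θ / 2) * (ZL n m y' ⬝ᵥ C *ᵥ ZL n m y'))) y (eZ n m j))
      = fun y => θ * (Real.exp ((θ / 2) * (ZL n m y ⬝ᵥ C *ᵥ ZL n m y)) * CZj y) := by
    funext y
    rw [fderiv_phi_eZ θ C hs y j, hCZj_apply]
    ring
  rw [funeq]
  have hD := ((hasFDerivAt_phi θ C hs x).fun_mul CZj.hasFDerivAt).const_mul θ
  rw [hD.fderiv]
  simp only [ContinuousLinearMap.smul_apply, ContinuousLinearMap.add_apply,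
    ContinuousLinearMap.smul_apply, smul_eq_mul, hCZj_apply]
  rw [ZL_eZ]
  have h1 : (Matrix.mulVecLin C) (Pi.single i 1) = C *ᵥ Pi.single i 1 := rfl
  have h2 : (C *ᵥ (Pi.single i (1:ℝ))) j = C j i := by
    simp [mulVec, dotProduct, Pi.single_apply]
  simp only [ContinuousLinearMap.coe_comp', Function.comp_apply,
    ContinuousLinearMap.proj_apply, LinearMap.coe_toContinuousLinearMap']
  rw [h2, ZL_eZ, dotL_apply, dot_single]

end Deriv

section Formula

variable {n m : ℕ} (θ : ℝ) (C : Matrix (Fin (n + m)) (Fin (n + m)) ℝ)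

lemma gleGen_phi (β : ℝ) (F : (Fin n → ℝ) → (Fin n → ℝ))
    (Γ Sig : (Fin n → ℝ) → Matrix (Fin (n + m)) (Fin (n + m)) ℝ)
    (hs : ∀ i j, C i j = C j i)
    (x : (Fin n → ℝ) × (Fin n → ℝ) × (Fin m → ℝ)) :
    gleGen β F Γ Sig
        (fun y => Real.exp ((θ / 2) * (ZL n m y ⬝ᵥ C *ᵥ ZL n m y))) x
      = θ * Real.exp ((θ / 2) * (ZL n m x ⬝ᵥ C *ᵥ ZL n m x)) *
        ((∑ i, F x.1 i * (C *ᵥ ZL n m x) (Fin.castAdd m i))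
          - ((Γ x.1 *ᵥ ZL n m x) ⬝ᵥ (C *ᵥ ZL n m x))
          + (1 / (2 * β)) * ((∑ i, ∑ j, (Sig x.1 * (Sig x.1)ᵀ) i j * C j i)
            + θ * ∑ i, ∑ j, (Sig x.1 * (Sig x.1)ᵀ) i j *
                ((C *ᵥ ZL n m x) j * (C *ᵥ ZL n m x) i))) := by
  have hz : (Fin.addCases x.2.1 x.2.2 : Fin (n + m) → ℝ) = ZL n m x := rfl
  set E := Real.exp ((θ / 2) * (ZL n m x ⬝ᵥ C *ᵥ ZL n m x)) with hE
  set w := C *ᵥ ZL n m x with hw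
  have e1 : ∀ i, fderiv ℝ (fun y => Real.exp ((θ / 2) * (ZL n m y ⬝ᵥ C *ᵥ ZL n m y)))
      x (eP n m i) = E * (θ * w (Fin.castAdd m i)) := fun i => fderiv_phi_eP θ C hs x i
  have e2 : ∀ i, fderiv ℝ (fun y => Real.exp ((θ / 2) * (ZL n m y ⬝ᵥ C *ᵥ ZL n m y)))
      x (eQ n m i) = 0 := fun i => fderiv_phi_eQ θ C hs x i
  have e3 : ∀ j, fderiv ℝ (fun y => Real.exp ((θ / 2) * (ZL n m y ⬝ᵥ C *ᵥ ZL n m y)))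
      x (eZ n m j) = E * (θ * w j) := fun j => fderiv_phi_eZ θ C hs x j
  have e4 : ∀ i j, fderiv ℝ (fun y =>
      fderiv ℝ (fun y' => Real.exp ((θ / 2) * (ZL n m y' ⬝ᵥ C *ᵥ ZL n m y'))) y (eZ n m j))
      x (eZ n m i) = θ * (E * C j i + w j * (E * (θ * w i))) :=
    fun i j => fderiv2_phi θ C hs x i j
  unfold gleGen
  simp only [hz, e1, e2, e3, e4, mul_zero, Finset.sum_const_zero, add_zero]
  have A1 : ∑ i, F x.1 i * (E * (θ * w (Fin.castAdd m i)))
      = θ * E * ∑ i, F x.1 i * w (Fin.castAdd m i) := by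
    rw [Finset.mul_sum]; exact Finset.sum_congr rfl fun i _ => by ring
  have A3 : ∑ i, (Γ x.1 *ᵥ ZL n m x) i * (E * (θ * w i))
      = θ * E * ((Γ x.1 *ᵥ ZL n m x) ⬝ᵥ w) := by
    rw [dotProduct, Finset.mul_sum]; exact Finset.sum_congr rfl fun i _ => by ring
  have A4 : ∑ i, ∑ j, (Sig x.1 * (Sig x.1)ᵀ) i j * (θ * (E * C j i + w j * (E * (θ * w i))))
      = θ * E * (∑ i, ∑ j, (Sig x.1 * (Sig x.1)ᵀ) i j * C j i)
        + θ * E * (θ * ∑ i, ∑ j, (Sig x.1 * (Sig x.1)ᵀ) i j * (w j * w i)) := by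
    rw [Finset.mul_sum, Finset.mul_sum, Finset.mul_sum, ← Finset.sum_add_distrib]
    refine Finset.sum_congr rfl fun i _ => ?_
    rw [Finset.mul_sum, Finset.mul_sum, Finset.mul_sum, ← Finset.sum_add_distrib]
    exact Finset.sum_congr rfl fun j _ => by ring
  rw [A1, A3, A4]
  ring

end Formula

section Analysis

lemma posdef_mu {N : ℕ} (hN : 0 < N) (C : Matrix (Fin N) (Fin N) ℝ) (hC : C.PosDef) :
    ∃ mu : ℝ, 0 < mu ∧ ∀ z : Fin N → ℝ, mu * ‖z‖ ^ 2 ≤ z ⬝ᵥ C *ᵥ z := by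
  have hcont : Continuous fun z : Fin N → ℝ => z ⬝ᵥ C *ᵥ z := by
    simp only [dotProduct, mulVec]
    exact continuous_finset_sum _ fun i _ => (continuous_apply i).mul
      (continuous_finset_sum _ fun j _ => continuous_const.mul (continuous_apply j))
  haveI : Nontrivial (Fin N → ℝ) := by
    refine ⟨⟨0, Pi.single ⟨0, hN⟩ 1, fun h => ?_⟩⟩
    have := congrFun h ⟨0, hN⟩
    simp at this
  have hsph : (Metric.sphere (0 : Fin N → ℝ) 1).Nonempty :=
    NormedSpace.sphere_nonempty.mpr zero_le_one
  obtain ⟨z0, hz0, hmin⟩ :=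
    (isCompact_sphere (0 : Fin N → ℝ) 1).exists_isMinOn hsph hcont.continuousOn
  have hz0n : ‖z0‖ = 1 := by simpa using mem_sphere_zero_iff_norm.mp hz0
  have hz0ne : z0 ≠ 0 := by
    intro h; rw [h] at hz0n; simp at hz0n
  have hpos : 0 < z0 ⬝ᵥ C *ᵥ z0 := by
    have := hC.dotProduct_mulVec_pos hz0ne
    simpa using this
  refine ⟨_, hpos, fun z => ?_⟩
  rcases eq_or_ne z 0 with rfl | hz
  · simp
  · have hnz : (0 : ℝ) < ‖z‖ := norm_pos_iff.mpr hz
    set u := ‖z‖⁻¹ • z with hu_def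
    have hu : u ∈ Metric.sphere (0 : Fin N → ℝ) 1 := by
      rw [mem_sphere_zero_iff_norm, hu_def, norm_smul, norm_inv, norm_norm,
        inv_mul_cancel₀ hnz.ne']
    have hmin' : z0 ⬝ᵥ C *ᵥ z0 ≤ u ⬝ᵥ C *ᵥ u := hmin hu
    have hscale : u ⬝ᵥ C *ᵥ u = ‖z‖⁻¹ ^ 2 * (z ⬝ᵥ C *ᵥ z) := by
      rw [hu_def]
      simp only [Matrix.mulVec_smul, smul_dotProduct, dotProduct_smul,
        smul_eq_mul]
      ring
    rw [hscale] at hmin'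
    have h2 := mul_le_mul_of_nonneg_left hmin' (sq_nonneg ‖z‖)
    have h3 : ‖z‖ ^ 2 * (‖z‖⁻¹ ^ 2 * (z ⬝ᵥ C *ᵥ z)) = z ⬝ᵥ C *ᵥ z := by
      field_simp
    rw [h3] at h2
    nlinarith [h2]

lemma exp_final (θ a κ Q : ℝ) (hθ : 0 ≤ θ) (ha : 0 < a) (hκ : 0 < κ) (hQ : 0 ≤ Q) :
    Real.exp ((θ / 2) * Q) * (a - κ * Q) ≤ Real.exp ((θ / 2) * (a / κ)) * a := by
  rcases le_or_gt Q (a / κ) with h | h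
  · have hκQ : κ * Q ≤ a := by
      have := mul_le_mul_of_nonneg_left h hκ.le
      rwa [mul_div_cancel₀ a hκ.ne'] at this
    have h1 : Real.exp ((θ / 2) * Q) ≤ Real.exp ((θ / 2) * (a / κ)) :=
      Real.exp_le_exp.mpr (by nlinarith)
    exact mul_le_mul h1 (by nlinarith) (by linarith) (Real.exp_pos _).le
  · have hκQ : a < κ * Q := by
      have := mul_lt_mul_of_pos_left h hκ
      rwa [mul_div_cancel₀ a hκ.ne'] at this
    have h1 : Real.exp ((θ / 2) * Q) * (a - κ * Q) ≤ 0 :=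
      mul_nonpos_of_nonneg_of_nonpos (Real.exp_pos _).le (by linarith)
    have h2 : 0 < Real.exp ((θ / 2) * (a / κ)) * a :=
      mul_pos (Real.exp_pos _) ha
    linarith

lemma double_sum_bound {N : ℕ} (f : Fin N → Fin N → ℝ) (M : ℝ)
    (h : ∀ i j, |f i j| ≤ M) : |∑ i, ∑ j, f i j| ≤ (N : ℝ) ^ 2 * M := by
  calc |∑ i, ∑ j, f i j| ≤ ∑ i, |∑ j, f i j| := Finset.abs_sum_le_sum_abs _ _
    _ ≤ ∑ i : Fin N, ∑ j : Fin N, |f i j| :=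
        Finset.sum_le_sum fun i _ => Finset.abs_sum_le_sum_abs _ _
    _ ≤ ∑ _i : Fin N, ∑ _j : Fin N, M :=
        Finset.sum_le_sum fun i _ => Finset.sum_le_sum fun j _ => h i j
    _ = (N : ℝ) ^ 2 * M := by simp [Finset.sum_const, Finset.card_univ]; ring

lemma mulVec_entry_bound {N : ℕ} (C : Matrix (Fin N) (Fin N) ℝ) (Mc : ℝ)
    (hMc : ∀ i j, |C i j| ≤ Mc) (z : Fin N → ℝ) (j : Fin N) :
    |(C *ᵥ z) j| ≤ (N : ℝ) * Mc * ‖z‖ := by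
  have hzk : ∀ k, |z k| ≤ ‖z‖ := fun k => by
    simpa [Real.norm_eq_abs] using norm_le_pi_norm z k
  have hMc0 : 0 ≤ Mc := (abs_nonneg _).trans (hMc j j)
  calc |(C *ᵥ z) j| = |∑ k, C j k * z k| := by simp [mulVec, dotProduct]
    _ ≤ ∑ k, |C j k * z k| := Finset.abs_sum_le_sum_abs _ _
    _ ≤ ∑ _k : Fin N, Mc * ‖z‖ := Finset.sum_le_sum fun k _ => by
        rw [abs_mul]
        exact mul_le_mul (hMc j k) (hzk k) (abs_nonneg _) hMc0
    _ = (N : ℝ) * Mc * ‖z‖ := by simp [Finset.sum_const, Finset.card_univ]; ring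

end Analysis

lemma gamma_coer {N : ℕ} (G C : Matrix (Fin N) (Fin N) ℝ) (hCt : Cᵀ = C)
    (z : Fin N → ℝ) :
    z ⬝ᵥ ((Gᵀ * C + C * G) *ᵥ z) = 2 * ((G *ᵥ z) ⬝ᵥ (C *ᵥ z)) := by
  rw [Matrix.add_mulVec, dotProduct_add, ← Matrix.mulVec_mulVec, ← Matrix.mulVec_mulVec]
  rw [Matrix.dotProduct_mulVec z Gᵀ, Matrix.vecMul_transpose]
  rw [Matrix.dotProduct_mulVec z C]
  have hzC : z ᵥ* C = C *ᵥ z := by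
    conv_lhs => rw [← hCt]
    rw [Matrix.vecMul_transpose]
  rw [hzC, dotProduct_comm (C *ᵥ z) (G *ᵥ z)]
  ring

lemma linear_le_quad (c d : ℝ) (hd : 0 < d) :
    ∃ K : ℝ, 0 ≤ K ∧ ∀ t : ℝ, 0 ≤ t → c * t ≤ d * t ^ 2 + K := by
  refine ⟨c ^ 2 / (4 * d), by positivity, fun t ht => ?_⟩
  have h4 : (4 * d) * (c ^ 2 / (4 * d)) = c ^ 2 := by field_simp
  nlinarith [sq_nonneg (2 * d * t - c), hd, h4]

/-- Exponential Lyapunov estimate for the GLE with configuration-dependent coefficients on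
the torus: there exist `θ > 0` and `b` such that `K_θ(q,p,s) = exp((θ/2)·zᵀCz)` satisfies
`L K_θ ≤ −K_θ + b`. -/
theorem stmt6 {n m : ℕ} (hn : 0 < n) (hm : 0 < m) (β : ℝ) (hβ : 0 < β)
    (Γ Sig : (Fin n → ℝ) → Matrix (Fin (n + m)) (Fin (n + m)) ℝ)
    (hΓcont : ∀ i j, Continuous (fun q => Γ q i j))
    (hSigcont : ∀ i j, Continuous (fun q => Sig q i j))
    (hΓbdd : ∃ R : ℝ, ∀ q i j, |Γ q i j| ≤ R)
    (hSigbdd : ∃ R : ℝ, ∀ q i j, |Sig q i j| ≤ R)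
    (F : (Fin n → ℝ) → (Fin n → ℝ)) (hFcont : Continuous F)
    (hFbdd : ∃ R : ℝ, ∀ q, ‖F q‖ ≤ R)
    (C : Matrix (Fin (n + m)) (Fin (n + m)) ℝ) (hC : C.PosDef)
    (lam : ℝ) (hlam : 0 < lam)
    (hcoer : ∀ (q : Fin n → ℝ) (z : Fin (n + m) → ℝ),
      lam * (z ⬝ᵥ C.mulVec z) ≤ z ⬝ᵥ ((Γ q)ᵀ * C + C * Γ q).mulVec z) :
    ∃ θ : ℝ, 0 < θ ∧ ∃ b : ℝ,
      ∀ x : (Fin n → ℝ) × (Fin n → ℝ) × (Fin m → ℝ),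
        gleGen β F Γ Sig
          (fun y => Real.exp ((θ / 2) * ((Fin.addCases y.2.1 y.2.2 : Fin (n + m) → ℝ) ⬝ᵥ
              C.mulVec (Fin.addCases y.2.1 y.2.2)))) x
        ≤ -Real.exp ((θ / 2) * ((Fin.addCases x.2.1 x.2.2 : Fin (n + m) → ℝ) ⬝ᵥ
              C.mulVec (Fin.addCases x.2.1 x.2.2))) + b := by
  classical
  obtain ⟨RS0, hRS0⟩ := hSigbdd
  obtain ⟨RF0, hRF0⟩ := hFbdd
  set RS := max RS0 0 with hRSdef
  have hRS : ∀ q i j, |Sig q i j| ≤ RS := fun q i j => (hRS0 q i j).trans (le_max_left _ _)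
  have hRSnn : 0 ≤ RS := le_max_right _ _
  set RF := max RF0 0 with hRFdef
  have hRF : ∀ q, ‖F q‖ ≤ RF := fun q => (hRF0 q).trans (le_max_left _ _)
  have hRFnn : 0 ≤ RF := le_max_right _ _
  have hs : ∀ i j, C i j = C j i := fun i j => by
    have := hC.1.apply j i
    simpa using this
  have hCt : Cᵀ = C := by
    ext i j
    simpa [Matrix.transpose_apply] using hs j i
  set Mc := ∑ i, ∑ j, |C i j| with hMcdef
  have hMc : ∀ i j, |C i j| ≤ Mc := by
    intro i j
    calc |C i j| ≤ ∑ j', |C i j'| :=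
          Finset.single_le_sum (f := fun j' => |C i j'|) (fun k _ => abs_nonneg _)
            (Finset.mem_univ j)
      _ ≤ Mc := Finset.single_le_sum (f := fun i' => ∑ j', |C i' j'|)
          (fun k _ => Finset.sum_nonneg fun _ _ => abs_nonneg _) (Finset.mem_univ i)
  have hMcnn : 0 ≤ Mc := (abs_nonneg _).trans (hMc ⟨0, by omega⟩ ⟨0, by omega⟩)
  obtain ⟨mu, hmu, hmuz⟩ := posdef_mu (by omega) C hC
  set nn : ℝ := ((n + m : ℕ) : ℝ) with hnn
  have hnn0 : 0 ≤ nn := by positivity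
  set cW := nn * Mc with hcWdef
  have hcWnn : 0 ≤ cW := mul_nonneg hnn0 hMcnn
  set MS := nn * RS ^ 2 with hMSdef
  have hMSnn : 0 ≤ MS := mul_nonneg hnn0 (sq_nonneg _)
  have hSentry : ∀ q i j, |(Sig q * (Sig q)ᵀ) i j| ≤ MS := by
    intro q i j
    rw [Matrix.mul_apply]
    calc |∑ k, Sig q i k * (Sig q)ᵀ k j| ≤ ∑ k, |Sig q i k * (Sig q)ᵀ k j| :=
          Finset.abs_sum_le_sum_abs _ _
      _ ≤ ∑ _k : Fin (n + m), RS * RS := Finset.sum_le_sum fun k _ => by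
          rw [abs_mul, Matrix.transpose_apply]
          exact mul_le_mul (hRS q i k) (hRS q j k) (abs_nonneg _) hRSnn
      _ = MS := by
          simp only [Finset.sum_const, Finset.card_univ, Fintype.card_fin, nsmul_eq_mul]
          rw [hMSdef, hnn]; ring
  set c1 := (n : ℝ) * (RF * cW) with hc1def
  have hc1nn : 0 ≤ c1 := by positivity
  set c2 := nn ^ 2 * (MS * (cW * cW)) with hc2def
  have hc2nn : 0 ≤ c2 := by positivity
  set c3 := nn ^ 2 * (MS * Mc) with hc3def
  have hc3nn : 0 ≤ c3 := by positivity
  have hden : (0 : ℝ) < 2 * (c2 + 1) := by nlinarith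
  set θ := min 1 (β * mu * lam / (2 * (c2 + 1))) with hθdef
  have hθpos : 0 < θ := lt_min one_pos (div_pos (mul_pos (mul_pos hβ hmu) hlam) hden)
  have hθle : θ * (2 * (c2 + 1)) ≤ β * mu * lam := by
    have h1 : θ ≤ β * mu * lam / (2 * (c2 + 1)) := min_le_right _ _
    calc θ * (2 * (c2 + 1)) ≤ (β * mu * lam / (2 * (c2 + 1))) * (2 * (c2 + 1)) :=
          mul_le_mul_of_nonneg_right h1 hden.le
      _ = β * mu * lam := div_mul_cancel₀ _ hden.ne'
  obtain ⟨K1, hK1nn, hK1⟩ := linear_le_quad c1 (mu * lam / 8) (by positivity)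
  set Kc := K1 + (1 / (2 * β)) * c3 with hKcdef
  set K' := max Kc 0 with hK'def
  have hK'nn : 0 ≤ K' := le_max_right _ _
  set a := 1 + θ * K' with hadef
  have ha0 : 0 < a := by nlinarith [mul_nonneg hθpos.le hK'nn]
  set κ := θ * lam / 8 with hκdef
  have hκ0 : 0 < κ := by positivity
  refine ⟨θ, hθpos, Real.exp ((θ / 2) * (a / κ)) * a, fun x => ?_⟩
  show gleGen β F Γ Sig
      (fun y => Real.exp ((θ / 2) * (ZL n m y ⬝ᵥ C *ᵥ ZL n m y))) x
    ≤ -Real.exp ((θ / 2) * (ZL n m x ⬝ᵥ C *ᵥ ZL n m x)) + Real.exp ((θ / 2) * (a / κ)) * a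
  rw [gleGen_phi θ C β F Γ Sig hs x]
  set z := ZL n m x with hzdef
  set w := C *ᵥ z with hwdef
  set Q := z ⬝ᵥ w with hQdef
  set E := Real.exp ((θ / 2) * Q) with hEdef
  have hE : 0 < E := Real.exp_pos _
  have hzn : (0 : ℝ) ≤ ‖z‖ := norm_nonneg _
  have hQmu : mu * ‖z‖ ^ 2 ≤ Q := hmuz z
  have hQ0 : 0 ≤ Q := le_trans (by positivity) hQmu
  have hwj : ∀ j, |w j| ≤ cW * ‖z‖ := fun j => by
    have := mulVec_entry_bound C Mc hMc z j
    calc |w j| ≤ ((n + m : ℕ) : ℝ) * Mc * ‖z‖ := this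
      _ = cW * ‖z‖ := by rw [hcWdef, hnn]
  have hwnn : 0 ≤ cW * ‖z‖ := mul_nonneg hcWnn hzn
  -- bound on the F term
  have hSF : (∑ i, F x.1 i * w (Fin.castAdd m i)) ≤ c1 * ‖z‖ := by
    calc (∑ i, F x.1 i * w (Fin.castAdd m i)) ≤ |∑ i, F x.1 i * w (Fin.castAdd m i)| :=
          le_abs_self _
      _ ≤ ∑ i, |F x.1 i * w (Fin.castAdd m i)| := Finset.abs_sum_le_sum_abs _ _
      _ ≤ ∑ _i : Fin n, RF * (cW * ‖z‖) := Finset.sum_le_sum fun i _ => by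
          rw [abs_mul]
          have hFi : |F x.1 i| ≤ RF :=
            le_trans (by simpa [Real.norm_eq_abs] using norm_le_pi_norm (F x.1) i) (hRF x.1)
          exact mul_le_mul hFi (hwj _) (abs_nonneg _) hRFnn
      _ = c1 * ‖z‖ := by
          simp only [Finset.sum_const, Finset.card_univ, Fintype.card_fin, nsmul_eq_mul]
          rw [hc1def]; ring
  -- coercivity
  have hSG : lam * Q ≤ 2 * ((Γ x.1 *ᵥ z) ⬝ᵥ w) := by
    have h0 := hcoer x.1 z
    rw [gamma_coer (Γ x.1) C hCt z] at h0
    exact h0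
  -- bound on double sums
  have hSww : (∑ i, ∑ j, (Sig x.1 * (Sig x.1)ᵀ) i j * (w j * w i)) ≤ c2 * ‖z‖ ^ 2 := by
    calc (∑ i, ∑ j, (Sig x.1 * (Sig x.1)ᵀ) i j * (w j * w i))
        ≤ |∑ i, ∑ j, (Sig x.1 * (Sig x.1)ᵀ) i j * (w j * w i)| := le_abs_self _
      _ ≤ ((n + m : ℕ) : ℝ) ^ 2 * (MS * ((cW * ‖z‖) * (cW * ‖z‖))) := by
          refine double_sum_bound _ _ fun i j => ?_
          rw [abs_mul, abs_mul]
          exact mul_le_mul (hSentry x.1 i j)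
            (mul_le_mul (hwj j) (hwj i) (abs_nonneg _) hwnn)
            (mul_nonneg (abs_nonneg _) (abs_nonneg _)) hMSnn
      _ = c2 * ‖z‖ ^ 2 := by rw [hc2def, hnn]; ring
  have hStr : (∑ i, ∑ j, (Sig x.1 * (Sig x.1)ᵀ) i j * C j i) ≤ c3 := by
    calc (∑ i, ∑ j, (Sig x.1 * (Sig x.1)ᵀ) i j * C j i)
        ≤ |∑ i, ∑ j, (Sig x.1 * (Sig x.1)ᵀ) i j * C j i| := le_abs_self _
      _ ≤ ((n + m : ℕ) : ℝ) ^ 2 * (MS * Mc) := by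
          refine double_sum_bound _ _ fun i j => ?_
          rw [abs_mul]
          exact mul_le_mul (hSentry x.1 i j) (hMc j i) (abs_nonneg _) hMSnn
      _ = c3 := by rw [hc3def, hnn]
  set SFv := (∑ i, F x.1 i * w (Fin.castAdd m i)) with hSFv
  set SGv := ((Γ x.1 *ᵥ z) ⬝ᵥ w) with hSGv
  set Strv := (∑ i, ∑ j, (Sig x.1 * (Sig x.1)ᵀ) i j * C j i) with hStrv
  set Swwv := (∑ i, ∑ j, (Sig x.1 * (Sig x.1)ᵀ) i j * (w j * w i)) with hSwwv
  have hK'ge : K1 + (1 / (2 * β)) * c3 ≤ K' := by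
    rw [hK'def, hKcdef]; exact le_max_left _ _
  clear_value RS RF Mc nn cW MS c1 c2 c3 θ Kc K' a κ z w Q E SFv SGv Strv Swwv
  clear hΓcont hSigcont hFcont hcoer hRS0 hRF0 hRS hRF hMc hSentry hwj hmuz
  clear hMcdef hθdef hSFv hSGv hStrv hSwwv hzdef hwdef hQdef hnn hcWdef hMSdef
  clear hc1def hc2def hc3def hRSdef hRFdef hK'def hKcdef
  -- the bracket bound
  have hbr : SFv - SGv + (1 / (2 * β)) * (Strv + θ * Swwv) ≤ K' - (lam / 8) * Q := by
    have b1 : SFv ≤ (lam / 8) * Q + K1 := by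
      have hq := hK1 ‖z‖ hzn
      have h2a := mul_le_mul_of_nonneg_left hQmu (show (0:ℝ) ≤ lam / 8 by positivity)
      have h2b : (lam / 8) * (mu * ‖z‖ ^ 2) = (mu * lam / 8) * ‖z‖ ^ 2 := by ring
      linarith [hSF]
    have b2 : -SGv ≤ -(lam / 2) * Q := by linarith [hSG]
    have hβ' : (0:ℝ) ≤ 1 / (2 * β) := by positivity
    have b3 : (1 / (2 * β)) * Strv ≤ (1 / (2 * β)) * c3 :=
      mul_le_mul_of_nonneg_left hStr hβ'
    have b4 : (1 / (2 * β)) * (θ * Swwv) ≤ (lam / 4) * Q := by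
      have t1 : θ * Swwv ≤ θ * (c2 * ‖z‖ ^ 2) := mul_le_mul_of_nonneg_left hSww hθpos.le
      have t2a : θ * c2 ≤ β * mu * lam / 2 := by linarith [hθpos.le, hθle, hc2nn]
      have t2 := mul_le_mul_of_nonneg_right t2a (sq_nonneg ‖z‖)
      have t3 : (β * mu * lam / 2) * ‖z‖ ^ 2 ≤ (β * lam / 2) * Q := by
        have t3a := mul_le_mul_of_nonneg_left hQmu
          (show (0:ℝ) ≤ β * lam / 2 by positivity)
        have t3b : (β * lam / 2) * (mu * ‖z‖ ^ 2) = (β * mu * lam / 2) * ‖z‖ ^ 2 := by ring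
        linarith
      have t4 : θ * Swwv ≤ (β * lam / 2) * Q := by
        have e : θ * (c2 * ‖z‖ ^ 2) = (θ * c2) * ‖z‖ ^ 2 := by ring
        linarith
      have t5 := mul_le_mul_of_nonneg_left t4 hβ'
      have t6 : (1 / (2 * β)) * ((β * lam / 2) * Q) = (lam / 4) * Q := by
        field_simp
        ring
      linarith
    nlinarith [b1, b2, b3, b4, hK'ge]
  -- conclude
  have hθE : (0:ℝ) ≤ θ * E := mul_nonneg hθpos.le hE.le
  have step1 : θ * E * (SFv - SGv + (1 / (2 * β)) * (Strv + θ * Swwv))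
      ≤ θ * E * (K' - (lam / 8) * Q) :=
    mul_le_mul_of_nonneg_left hbr hθE
  have step2 : θ * E * (K' - (lam / 8) * Q) = E * (a - κ * Q) - E := by
    rw [hadef, hκdef]; ring
  have step3 : E * (a - κ * Q) ≤ Real.exp ((θ / 2) * (a / κ)) * a := by
    rw [hEdef]
    exact exp_final θ a κ Q hθpos.le ha0 hκ0 hQ0
  linarith [step1, step2.le, step3]
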